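/- Let r ≥ 1 and 0 < a, b < r be integers with a ≠ b, and suppose z^a + z^{a-r} + z^{-b} + z^{r-b} + z^{b-a} = z^{-a} + z^{r-a} + z^b + z^{b-r} + z^{a-b} in ℤ[z, z^{-1}]. Then a = b, a contradiction; hence no such a, b exist. -/

import Mathlib

open LaurentPolynomial

theorem ban_list_case4 (r a b : ℤ) (hr : 1 ≤ r)
    (ha : 0 < a) (har : a < r) (hb : 0 < b) (hbr : b < r) (hab : a ≠ b)
    (hid : (T a + T (a - r) + T (-b) + T (r - b) + T (b - a) :
        LaurentPolynomial ℤ)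
      = T (-a) + T (r - a) + T b + T (b - r) + T (a - b)) :
    False := by
  classical
  set f : ℤ → ℤ → ℤ := fun n c => if 0 < n then c else 0 with hf
  have hsum : ∀ p q : LaurentPolynomial ℤ, (p + q).coeff.sum f = p.coeff.sum f + q.coeff.sum f := by
    intro p q
    refine Finsupp.sum_add_index' (fun n => by simp [hf]) (fun n b₁ b₂ => ?_)
    simp only [hf]
    split_ifs <;> simp
  have hT : ∀ n : ℤ, (T n : LaurentPolynomial ℤ).coeff.sum f = if 0 < n then 1 else 0 := by
    intro n
    rw [LaurentPolynomial.T]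
    change (Finsupp.single n (1:ℤ)).sum f = _
    rw [Finsupp.sum_single_index (by simp [hf])]
  have h := congrArg (fun p : LaurentPolynomial ℤ => p.coeff.sum f) hid
  simp only [hsum, hT] at h
  split_ifs at h <;> omega
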